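/- Let X be a nonempty normal topological space and let P = {A ⊆ X : A ≠ X} (which is a primal on X). Then the relation ↪ on the power set of X defined by A ↪ B if and only if (cl(A) ∩ cl(B))ᶜ ∈ P (equivalently, cl(A) ∩ cl(B) ≠ ∅), where cl denotes topological closure, is a primal-proximity on X, i.e., it satisfies all five primal-proximity axioms with respect to P. -/
import Mathlib


open Set

/-- A collection `P` of subsets of `X` is a *primal* on `X`. -/
def IsPrimalOn {X : Type*} (P : Set (Set X)) : Prop :=
  (Set.univ : Set X) ∉ P ∧
  (∀ A B : Set X, A ∈ P → B ⊆ A → B ∈ P) ∧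
  (∀ A B : Set X, A ∩ B ∈ P → A ∈ P ∨ B ∈ P)

/-- A binary relation `r` on the power set of `X` is a *primal-proximity* with
respect to a primal `P` on `X`. -/
def IsPrimalProximity {X : Type*} (P : Set (Set X)) (r : Set X → Set X → Prop) : Prop :=
  (∀ A B : Set X, r A B → r B A) ∧
  (∀ A B C : Set X, r A (B ∪ C) ↔ (r A B ∨ r A C)) ∧
  (∀ A : Set X, Aᶜ ∉ P → ∀ B : Set X, ¬ r A B) ∧
  (∀ A B : Set X, (A ∩ B)ᶜ ∈ P → r A B) ∧
  (∀ A B : Set X, ¬ r A B →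
    ∃ C D : Set X, ¬ r A Cᶜ ∧ ¬ r Dᶜ B ∧ (C ∩ D)ᶜ ∉ P)

/-- The point-primal proximity of `A`: `A^↪ = {x | {x} ↪ A}`. -/
def ppp {X : Type*} (r : Set X → Set X → Prop) (A : Set X) : Set X :=
  {x : X | r {x} A}

lemma aux_ne {X : Type*} (S : Set X) : Sᶜ ≠ Set.univ ↔ S.Nonempty := by
  simp [compl_univ_iff, Set.nonempty_iff_ne_empty]

theorem stmt_2 {X : Type*} [Nonempty X] [TopologicalSpace X] [NormalSpace X] :
    IsPrimalProximity {A : Set X | A ≠ Set.univ}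
      (fun A B : Set X => (closure A ∩ closure B)ᶜ ∈ {A : Set X | A ≠ Set.univ}) := by
  have key : ∀ A B : Set X,
      ((closure A ∩ closure B)ᶜ ≠ Set.univ) ↔
        (closure A ∩ closure B).Nonempty := fun A B => aux_ne _
  refine ⟨?_, ?_, ?_, ?_, ?_⟩
  all_goals simp only [Set.mem_setOf_eq]
  · intro A B h
    rw [key] at h ⊢
    rwa [inter_comm]
  · intro A B C
    rw [key, key, key, closure_union, inter_union_distrib_left, union_nonempty]
  · intro A hA B
    rw [key]
    rw [not_not] at hA
    have : A = ∅ := by simpa [compl_univ_iff] using hA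
    simp [this]
  · intro A B h
    rw [key]
    rw [aux_ne] at h
    exact h.mono (inter_subset_inter subset_closure subset_closure)
  · intro A B h
    rw [key, Set.not_nonempty_iff_eq_empty] at h
    obtain ⟨U, V, hU, hV, hAU, hBV, hUV⟩ :=
      NormalSpace.normal (closure A) (closure B) isClosed_closure isClosed_closure
        (disjoint_iff_inter_eq_empty.mpr h)
    refine ⟨U, V, ?_, ?_, ?_⟩
    · rw [key, Set.not_nonempty_iff_eq_empty, closure_eq_iff_isClosed.mpr hU.isClosed_compl]
      have : closure A ∩ Uᶜ = ∅ := by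
        rw [← Set.disjoint_iff_inter_eq_empty]
        exact Set.disjoint_compl_right_iff_subset.mpr hAU
      exact this
    · rw [key, Set.not_nonempty_iff_eq_empty]
      rw [closure_eq_iff_isClosed.mpr hV.isClosed_compl]
      rw [← Set.disjoint_iff_inter_eq_empty]
      exact (Set.disjoint_compl_right_iff_subset.mpr hBV).symm
    · rw [not_not, compl_univ_iff, ← Set.disjoint_iff_inter_eq_empty]
      exact hUV
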